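/- arXiv:1003.4845 — 3 statements merged into one kernel-verified Lean document; each statement's English description precedes it below -/
import Mathlib

section
/- Let f : ℝ → ℝ be continuous and nonnegative, and y : ℝ → ℝ be differentiable and nonnegative, satisfying y'(t) ≤ 2 f(t) √(y(t)) for all t ∈ ℝ. Then for all t ≥ 0, √(y(t)) ≤ √(y(0)) + ∫₀ᵗ f(s) ds. -/
theorem stmt0 (f y : ℝ → ℝ) (hf : Continuous f) (hf0 : ∀ t, 0 ≤ f t)
    (hy : Differentiable ℝ y) (hy0 : ∀ t, 0 ≤ y t)
    (hineq : ∀ t, deriv y t ≤ 2 * f t * Real.sqrt (y t)) :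
    ∀ t, 0 ≤ t → Real.sqrt (y t) ≤ Real.sqrt (y 0) + ∫ s in (0:ℝ)..t, f s := by
  intro t ht
  -- suffices: for every ε > 0, √(y t) ≤ √(y 0 + ε) + ∫
  have key : ∀ ε : ℝ, 0 < ε →
      Real.sqrt (y t) ≤ Real.sqrt (y 0 + ε) + ∫ s in (0:ℝ)..t, f s := by
    intro ε hε
    set g : ℝ → ℝ := fun s => Real.sqrt (y s + ε) with hg
    have hpos : ∀ s, 0 < y s + ε := fun s => by linarith [hy0 s]
    have hgd : ∀ s, HasDerivAt g (deriv y s / (2 * Real.sqrt (y s + ε))) s := by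
      intro s
      have h1 : HasDerivAt (fun u => y u + ε) (deriv y s) s :=
        ((hy s).hasDerivAt).add_const ε
      have h2 := (Real.hasDerivAt_sqrt (hpos s).ne').comp s h1
      convert h2 using 1 <;> first | rfl | ring
    set B : ℝ → ℝ := fun u => g 0 + ∫ s in (0:ℝ)..u, f s with hB
    have hBd : ∀ u, HasDerivAt B (f u) u := by
      intro u
      have := (intervalIntegral.integral_hasDerivAt_right
        (hf.intervalIntegrable 0 u) (hf.stronglyMeasurableAtFilter _ _)
        (hf.continuousAt)).const_add (g 0)
      exact this
    have hanti : Antitone (fun u => g u - B u) := by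
      apply antitone_of_deriv_nonpos
      · exact fun u => ((hgd u).differentiableAt.sub (hBd u).differentiableAt)
      · intro u
        have hd : deriv (fun u => g u - B u) u
            = deriv y u / (2 * Real.sqrt (y u + ε)) - f u := by
          rw [deriv_fun_sub (hgd u).differentiableAt (hBd u).differentiableAt,
            (hgd u).deriv, (hBd u).deriv]
        rw [hd]
        have hs : 0 < 2 * Real.sqrt (y u + ε) := by
          have := Real.sqrt_pos.mpr (hpos u); linarith
        rw [sub_nonpos, div_le_iff₀ hs]
        calc deriv y u ≤ 2 * f u * Real.sqrt (y u) := hineq u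
          _ ≤ 2 * f u * Real.sqrt (y u + ε) := by
              gcongr
              · linarith [hf0 u]
              · linarith
          _ = f u * (2 * Real.sqrt (y u + ε)) := by ring
    have h1 : g t - B t ≤ g 0 - B 0 := hanti ht
    have hB0 : B 0 = g 0 := by simp [hB]
    have h2 : g t ≤ B t := by rw [hB0] at h1; linarith
    calc Real.sqrt (y t) ≤ g t := Real.sqrt_le_sqrt (by linarith)
      _ ≤ B t := h2
      _ = Real.sqrt (y 0 + ε) + ∫ s in (0:ℝ)..t, f s := rfl
  -- take ε → 0
  apply le_of_forall_pos_le_add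
  intro δ hδ
  have h := key (δ ^ 2) (by positivity)
  have hsq : Real.sqrt (y 0 + δ ^ 2) ≤ Real.sqrt (y 0) + δ := by
    have hb : y 0 + δ ^ 2 ≤ (Real.sqrt (y 0) + δ) ^ 2 := by
      nlinarith [Real.sq_sqrt (hy0 0), Real.sqrt_nonneg (y 0)]
    calc Real.sqrt (y 0 + δ ^ 2) ≤ Real.sqrt ((Real.sqrt (y 0) + δ) ^ 2) :=
          Real.sqrt_le_sqrt hb
      _ = Real.sqrt (y 0) + δ := Real.sqrt_sq (by positivity)
  linarith
end

section
/- Let k ≥ 2, ρ > 0, and let P(z) = ∑_{𝐣 ∈ ℐ_k} a_𝐣 z_{j_1}⋯z_{j_k} be a homogeneous polynomial of degree k with zero-momentum monomials and ‖P‖ = sup_𝐣 |a_𝐣| < ∞. Then for all z with ‖z‖_ρ = ∑_{j ∈ 𝒵} e^{ρ|j|}|z_j| < ∞, the Hamiltonian vector field satisfies ‖X_P(z)‖_ρ ≤ 2k ‖P‖ ‖z‖_ρ^{k-1}. -/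
/-- The index set is 𝒵 = ℤᵈ × {±1}; the Bool encodes the sign δ (true = +1). -/
abbrev Zidx (d : ℕ) := (Fin d → ℤ) × Bool

/-- Euclidean norm |j| = |a| of an index j = (a,δ). -/
noncomputable def znorm {d : ℕ} (j : Zidx d) : ℝ :=
  Real.sqrt (∑ i, ((j.1 i : ℝ)) ^ 2)

/-- Momentum ℳ(𝐣) = ∑ δᵢ aᵢ of a multi-index 𝐣. -/
def mom {d k : ℕ} (j : Fin k → Zidx d) : Fin d → ℤ :=
  ∑ i, (if (j i).2 then (1 : ℤ) else -1) • (j i).1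

open scoped Classical in
/-- The formal partial derivative ∂P/∂z_m of P(z) = ∑_𝐣 a_𝐣 z_{j₁}⋯z_{j_k},
evaluated at z. -/
noncomputable def formalDeriv {d k : ℕ}
    (a : (Fin k → Zidx d) → ℂ) (z : Zidx d → ℂ) (m : Zidx d) : ℂ :=
  ∑' j : Fin k → Zidx d,
    a j * ∑ i, (if j i = m then ∏ i' ∈ Finset.univ.erase i, z (j i') else 0)

open scoped ENNReal NNReal BigOperators
open Finset

open scoped Classical in
noncomputable def fterm {d k : ℕ} (a : (Fin k → Zidx d) → ℂ) (z : Zidx d → ℂ)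
    (m : Zidx d) (j : Fin k → Zidx d) : ℂ :=
  a j * ∑ i, (if j i = m then ∏ i' ∈ Finset.univ.erase i, z (j i') else 0)

lemma formalDeriv_eq {d k : ℕ} (a : (Fin k → Zidx d) → ℂ) (z : Zidx d → ℂ) (m : Zidx d) :
    formalDeriv a z m = ∑' j, fterm a z m j := rfl

section aux

lemma tsum_pi_fin_prod {α : Type*} (F : α → ℝ≥0∞) (n : ℕ) :
    ∑' g : Fin n → α, ∏ i, F (g i) = (∑' a, F a) ^ n := by
  induction n with
  | zero =>
      rw [pow_zero, tsum_eq_single (fun i => i.elim0)]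
      · simp
      · intro b hb; exact absurd (Subsingleton.elim _ _) hb
  | succ n ih =>
      rw [← (Fin.consEquiv (fun _ : Fin (n+1) => α)).tsum_eq, ENNReal.tsum_prod']
      calc ∑' x, ∑' g : Fin n → α, ∏ i, F ((Fin.consEquiv (fun _ : Fin (n+1) => α)) (x,g) i)
          = ∑' x, ∑' g : Fin n → α, F x * ∏ i, F (g i) := by
            refine tsum_congr fun x => tsum_congr fun g => ?_
            simp [Fin.prod_univ_succ]
        _ = ∑' x, F x * ∑' g : Fin n → α, ∏ i, F (g i) :=
            tsum_congr fun x => ENNReal.tsum_mul_left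
        _ = (∑' a, F a) * (∑' a, F a) ^ n := by rw [ENNReal.tsum_mul_right, ih]
        _ = (∑' a, F a) ^ (n+1) := by ring

lemma tsum_pi_prod {ι α : Type*} [Fintype ι] (F : α → ℝ≥0∞) :
    ∑' g : ι → α, ∏ i, F (g i) = (∑' a, F a) ^ (Fintype.card ι) := by
  classical
  let e := Fintype.equivFin ι
  rw [← tsum_pi_fin_prod F (Fintype.card ι)]
  rw [← (Equiv.arrowCongr e.symm (Equiv.refl α)).tsum_eq]
  apply tsum_congr
  intro h
  exact Fintype.prod_equiv e _ _ (fun i => by simp [Equiv.arrowCongr])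

lemma enorm_tsum_le {ι : Type*} (g : ι → ℂ) :
    (‖∑' j, g j‖₊ : ℝ≥0∞) ≤ ∑' j, (‖g j‖₊ : ℝ≥0∞) := by
  by_cases h : ∑' j, (‖g j‖₊ : ℝ≥0∞) = ⊤
  · simp [h]
  · have hs : Summable fun j => ‖g j‖₊ := ENNReal.tsum_coe_ne_top_iff_summable.mp h
    rw [← ENNReal.coe_tsum hs]
    exact_mod_cast nnnorm_tsum_le hs


lemma znorm_eq {d : ℕ} (x : Zidx d) :
    znorm x = ‖((WithLp.equiv 2 (Fin d → ℝ)).symm fun t => (x.1 t : ℝ))‖ := by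
  rw [EuclideanSpace.norm_eq]
  simp [znorm, sq_abs]

lemma znorm_le_sum {d k : ℕ} (j : Fin k → Zidx d) (i : Fin k)
    (h0 : mom j = 0) :
    znorm (j i) ≤ ∑ i' ∈ Finset.univ.erase i, znorm (j i') := by
  classical
  set u : Fin k → EuclideanSpace ℝ (Fin d) :=
    fun i'' => (WithLp.equiv 2 (Fin d → ℝ)).symm fun t => ((j i'').1 t : ℝ) with hu
  have hε : ∀ i'', |(if (j i'').2 then (1:ℝ) else -1)| = 1 := by
    intro i''; split <;> norm_num
  have hsum : ∑ i'', (if (j i'').2 then (1:ℝ) else -1) • u i'' = 0 := by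
    set L := (WithLp.linearEquiv 2 ℝ (Fin d → ℝ)).symm with hL
    set v : Fin k → (Fin d → ℝ) := fun i'' t => ((j i'').1 t : ℝ) with hv
    have huv : ∀ i'', u i'' = L (v i'') := fun i'' => rfl
    have hv0 : ∑ i'', (if (j i'').2 then (1:ℝ) else -1) • v i'' = 0 := by
      funext t
      have ht : (mom j) t = 0 := by rw [h0]; rfl
      have h1 : ∑ i'', (if (j i'').2 then ((j i'').1 t) else -((j i'').1 t)) = 0 := by
        simpa [mom, Finset.sum_apply, ite_apply] using ht
      have h2 : ∑ i'', (if (j i'').2 then (((j i'').1 t : ℝ)) else -(((j i'').1 t : ℝ))) = 0 := by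
        have := congrArg (fun n : ℤ => (n : ℝ)) h1
        push_cast at this
        simpa [apply_ite (fun n : ℤ => (n:ℝ))] using this
      simp only [Finset.sum_apply, Pi.smul_apply, smul_eq_mul, Pi.zero_apply]
      rw [← h2]
      refine Finset.sum_congr rfl fun i'' _ => ?_
      have hvt : v i'' t = ((j i'').1 t : ℝ) := rfl
      rw [hvt]
      split <;> ring
    calc ∑ i'', (if (j i'').2 then (1:ℝ) else -1) • u i''
        = L (∑ i'', (if (j i'').2 then (1:ℝ) else -1) • v i'') := by
          rw [map_sum]
          exact Finset.sum_congr rfl fun i'' _ => by rw [map_smul, huv]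
      _ = 0 := by rw [hv0, map_zero]
  have hiso : (if (j i).2 then (1:ℝ) else -1) • u i =
      -∑ i' ∈ Finset.univ.erase i, (if (j i').2 then (1:ℝ) else -1) • u i' := by
    apply eq_neg_of_add_eq_zero_left
    rw [Finset.add_sum_erase _ (fun i'' => (if (j i'').2 = true then (1:ℝ) else -1) • u i'')
      (Finset.mem_univ i)]
    exact hsum
  have h1 : znorm (j i) = ‖(if (j i).2 then (1:ℝ) else -1) • u i‖ := by
    rw [norm_smul, Real.norm_eq_abs, hε, one_mul, znorm_eq]
  rw [h1, hiso, norm_neg]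
  calc ‖∑ i' ∈ Finset.univ.erase i, (if (j i').2 then (1:ℝ) else -1) • u i'‖
      ≤ ∑ i' ∈ Finset.univ.erase i, ‖(if (j i').2 then (1:ℝ) else -1) • u i'‖ :=
        norm_sum_le _ _
    _ = ∑ i' ∈ Finset.univ.erase i, znorm (j i') := by
        refine Finset.sum_congr rfl fun i' _ => ?_
        rw [norm_smul, Real.norm_eq_abs, hε, one_mul, znorm_eq]

end aux

open scoped Classical in
lemma key_bound {d k : ℕ} (ρ : ℝ) (hρ : 0 ≤ ρ) (a : (Fin k → Zidx d) → ℂ) (Pn : ℝ)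
    (hmom : ∀ j, a j ≠ 0 → mom j = 0) (hbd : ∀ j, ‖a j‖ ≤ Pn) (hPn : 0 ≤ Pn)
    (z : Zidx d → ℂ) (m : Zidx d) (j : Fin k → Zidx d) :
    Real.exp (ρ * znorm m) * ‖fterm a z m j‖ ≤
    Pn * ∑ i, (if mom j = 0 ∧ j i = m then
        ∏ i' ∈ Finset.univ.erase i, (Real.exp (ρ * znorm (j i')) * ‖z (j i')‖) else 0) := by
  have hw0 : ∀ x : Zidx d, 0 ≤ Real.exp (ρ * znorm x) * ‖z x‖ :=
    fun x => mul_nonneg (Real.exp_pos _).le (norm_nonneg _)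
  by_cases ha : a j = 0
  · rw [fterm, ha, zero_mul, norm_zero, mul_zero]
    refine mul_nonneg hPn (Finset.sum_nonneg fun i _ => ?_)
    split
    · exact Finset.prod_nonneg fun i' _ => hw0 _
    · exact le_refl 0
  · have h0 := hmom j ha
    have h1 : ‖∑ i, (if j i = m then ∏ i' ∈ Finset.univ.erase i, z (j i') else 0)‖ ≤
        ∑ i, (if j i = m then ∏ i' ∈ Finset.univ.erase i, ‖z (j i')‖ else 0) := by
      refine (norm_sum_le _ _).trans_eq (Finset.sum_congr rfl fun i _ => ?_)
      split
      · exact norm_prod _ _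
      · exact norm_zero
    have h2 : ∀ i : Fin k,
        Real.exp (ρ * znorm m) * (if j i = m then ∏ i' ∈ Finset.univ.erase i, ‖z (j i')‖ else 0)
        ≤ (if mom j = 0 ∧ j i = m then
            ∏ i' ∈ Finset.univ.erase i, (Real.exp (ρ * znorm (j i')) * ‖z (j i')‖) else 0) := by
      intro i
      by_cases hji : j i = m
      · rw [if_pos hji, if_pos ⟨h0, hji⟩, Finset.prod_mul_distrib]
        refine mul_le_mul_of_nonneg_right ?_ (Finset.prod_nonneg fun _ _ => norm_nonneg _)
        have hle := znorm_le_sum j i h0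
        calc Real.exp (ρ * znorm m) = Real.exp (ρ * znorm (j i)) := by rw [hji]
          _ ≤ Real.exp (ρ * ∑ i' ∈ Finset.univ.erase i, znorm (j i')) :=
              Real.exp_le_exp.mpr (mul_le_mul_of_nonneg_left hle hρ)
          _ = ∏ i' ∈ Finset.univ.erase i, Real.exp (ρ * znorm (j i')) := by
              rw [Finset.mul_sum, Real.exp_sum]
      · rw [if_neg hji, if_neg (fun hc => hji hc.2), mul_zero]
    calc Real.exp (ρ * znorm m) * ‖fterm a z m j‖
        = Real.exp (ρ * znorm m) * (‖a j‖ * ‖∑ i, (if j i = m then ∏ i' ∈ Finset.univ.erase i, z (j i') else 0)‖) := by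
          rw [fterm, norm_mul]
      _ ≤ Real.exp (ρ * znorm m) *
          (Pn * ∑ i, (if j i = m then ∏ i' ∈ Finset.univ.erase i, ‖z (j i')‖ else 0)) := by
          refine mul_le_mul_of_nonneg_left ?_ (Real.exp_pos _).le
          refine mul_le_mul (hbd j) h1 (norm_nonneg _) hPn
      _ = Pn * ∑ i, Real.exp (ρ * znorm m) *
            (if j i = m then ∏ i' ∈ Finset.univ.erase i, ‖z (j i')‖ else 0) := by
          rw [Finset.mul_sum, Finset.mul_sum, Finset.mul_sum]
          exact Finset.sum_congr rfl fun i _ => by ring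
      _ ≤ Pn * ∑ i, (if mom j = 0 ∧ j i = m then
            ∏ i' ∈ Finset.univ.erase i, (Real.exp (ρ * znorm (j i')) * ‖z (j i')‖) else 0) :=
          mul_le_mul_of_nonneg_left (Finset.sum_le_sum fun i _ => h2 i) hPn

theorem stmt5 (d k : ℕ) (hk : 2 ≤ k) (ρ : ℝ) (hρ : 0 < ρ)
    (a : (Fin k → Zidx d) → ℂ) (Pn : ℝ)
    (hmom : ∀ j, a j ≠ 0 → mom j = 0)
    (hbd : ∀ j, ‖a j‖ ≤ Pn)
    (z : Zidx d → ℂ)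
    (hz : Summable fun j : Zidx d => Real.exp (ρ * znorm j) * ‖z j‖) :
    Summable (fun m : Zidx d => Real.exp (ρ * znorm m) * ‖formalDeriv a z m‖) ∧
    ∑' m : Zidx d, Real.exp (ρ * znorm m) * ‖formalDeriv a z m‖ ≤
      2 * k * Pn * (∑' j : Zidx d, Real.exp (ρ * znorm j) * ‖z j‖) ^ (k - 1) := by
  classical
  have hPn : 0 ≤ Pn := le_trans (norm_nonneg _) (hbd fun _ => ((0 : Fin d → ℤ), true))
  have hw0 : ∀ x : Zidx d, 0 ≤ Real.exp (ρ * znorm x) * ‖z x‖ :=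
    fun x => mul_nonneg (Real.exp_pos _).le (norm_nonneg _)
  set S : ℝ := ∑' j : Zidx d, Real.exp (ρ * znorm j) * ‖z j‖ with hS
  have hS0 : 0 ≤ S := tsum_nonneg hw0
  set W : Zidx d → ℝ≥0∞ := fun x => ENNReal.ofReal (Real.exp (ρ * znorm x) * ‖z x‖) with hWdef
  have hWsum : ∑' x, W x = ENNReal.ofReal S := (ENNReal.ofReal_tsum_of_nonneg hw0 hz).symm
  -- bound for each slot i
  have hi : ∀ i : Fin k,
      (∑' j : Fin k → Zidx d,
        (if mom j = 0 then ∏ i' ∈ Finset.univ.erase i, W (j i') else 0))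
        ≤ 2 * (ENNReal.ofReal S) ^ (k - 1) := by
    intro i
    have hsub : (∑' j : Fin k → Zidx d,
        (if mom j = 0 then ∏ i' ∈ Finset.univ.erase i, W (j i') else 0))
        = ∑' j : {j : Fin k → Zidx d | mom j = 0},
            ∏ i' ∈ Finset.univ.erase i, W (j.1 i') := by
      rw [tsum_subtype {j : Fin k → Zidx d | mom j = 0}
        (fun j => ∏ i' ∈ Finset.univ.erase i, W (j i'))]
      exact tsum_congr fun j => by
        by_cases hj : mom j = 0 <;> simp [Set.indicator_apply, hj]
    rw [hsub]
    set φ : {j : Fin k → Zidx d | mom j = 0} → ({i' : Fin k // i' ≠ i} → Zidx d) × Bool :=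
      fun jj => (fun i' => jj.1 i'.1, (jj.1 i).2) with hφ
    have hid : ∀ j : Fin k → Zidx d, mom j = 0 →
        (if (j i).2 then (1:ℤ) else -1) • (j i).1 =
          -∑ i' ∈ Finset.univ.erase i, (if (j i').2 then (1:ℤ) else -1) • (j i').1 := by
      intro j hj
      apply eq_neg_of_add_eq_zero_left
      rw [Finset.add_sum_erase _ (fun x => (if (j x).2 = true then (1:ℤ) else -1) • (j x).1)
        (Finset.mem_univ i)]
      exact hj
    have hφinj : Function.Injective φ := by
      rintro ⟨j1, hj1⟩ ⟨j2, hj2⟩ heq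
      simp only [hφ, Prod.mk.injEq] at heq
      obtain ⟨hg, hb⟩ := heq
      have hagree : ∀ i', i' ≠ i → j1 i' = j2 i' := fun i' h => congrFun hg ⟨i', h⟩
      have he : (if (j1 i).2 then (1:ℤ) else -1) • (j1 i).1 =
          (if (j2 i).2 then (1:ℤ) else -1) • (j2 i).1 := by
        rw [hid j1 hj1, hid j2 hj2]
        congr 1
        exact Finset.sum_congr rfl fun i' hi' => by
          rw [hagree i' (Finset.ne_of_mem_erase hi')]
      rw [hb] at he
      have h1eq : (j1 i).1 = (j2 i).1 := by
        by_cases hB : (j2 i).2 <;> simp [hB] at he <;> exact he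
      refine Subtype.ext (funext fun i'' => ?_)
      by_cases hii : i'' = i
      · subst hii
        exact Prod.ext h1eq hb
      · exact hagree i'' hii
    have hcomp : ∀ jj : {j : Fin k → Zidx d | mom j = 0},
        (∏ i' ∈ Finset.univ.erase i, W (jj.1 i')) =
        (fun p : ({i' : Fin k // i' ≠ i} → Zidx d) × Bool =>
          ∏ i' : {i' : Fin k // i' ≠ i}, W (p.1 i')) (φ jj) := by
      intro jj
      simp only [hφ]
      exact Finset.prod_subtype (Finset.univ.erase i)
        (fun x => by simp [Finset.mem_erase]) (fun x => W (jj.1 x))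
    calc ∑' jj : {j : Fin k → Zidx d | mom j = 0}, ∏ i' ∈ Finset.univ.erase i, W (jj.1 i')
        = ∑' jj, (fun p : ({i' : Fin k // i' ≠ i} → Zidx d) × Bool =>
            ∏ i' : {i' : Fin k // i' ≠ i}, W (p.1 i')) (φ jj) := tsum_congr hcomp
      _ ≤ ∑' p : ({i' : Fin k // i' ≠ i} → Zidx d) × Bool,
            ∏ i' : {i' : Fin k // i' ≠ i}, W (p.1 i') :=
          ENNReal.tsum_comp_le_tsum_of_injective hφinj _
      _ = 2 * (ENNReal.ofReal S) ^ (k - 1) := by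
          rw [ENNReal.tsum_prod']
          have hbool : ∀ g : {i' : Fin k // i' ≠ i} → Zidx d,
              (∑' _b : Bool, ∏ i' : {i' : Fin k // i' ≠ i}, W (g i')) =
              2 * ∏ i' : {i' : Fin k // i' ≠ i}, W (g i') := by
            intro g
            rw [tsum_fintype]
            simp [two_mul]
          calc (∑' g : {i' : Fin k // i' ≠ i} → Zidx d, ∑' _b : Bool,
                ∏ i' : {i' : Fin k // i' ≠ i}, W (g i'))
              = ∑' g : {i' : Fin k // i' ≠ i} → Zidx d,
                  2 * ∏ i' : {i' : Fin k // i' ≠ i}, W (g i') := tsum_congr hbool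
            _ = 2 * ∑' g : {i' : Fin k // i' ≠ i} → Zidx d,
                  ∏ i' : {i' : Fin k // i' ≠ i}, W (g i') := ENNReal.tsum_mul_left
            _ = 2 * (∑' x, W x) ^ (Fintype.card {i' : Fin k // i' ≠ i}) := by
                rw [tsum_pi_prod]
            _ = 2 * (ENNReal.ofReal S) ^ (k - 1) := by
                rw [hWsum]
                congr 2
                rw [Fintype.card_subtype_compl, Fintype.card_subtype_eq, Fintype.card_fin]
  -- pointwise enorm bound on formalDeriv
  have step1 : ∀ m : Zidx d,
      ENNReal.ofReal (Real.exp (ρ * znorm m) * ‖formalDeriv a z m‖)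
        ≤ ∑' j : Fin k → Zidx d, ENNReal.ofReal (Real.exp (ρ * znorm m) * ‖fterm a z m j‖) := by
    intro m
    rw [formalDeriv_eq, ENNReal.ofReal_mul (Real.exp_pos _).le, ofReal_norm, enorm_eq_nnnorm]
    calc (ENNReal.ofReal (Real.exp (ρ * znorm m)) : ℝ≥0∞) * ‖∑' j, fterm a z m j‖₊
        ≤ ENNReal.ofReal (Real.exp (ρ * znorm m)) * ∑' j, (‖fterm a z m j‖₊ : ℝ≥0∞) :=
          mul_le_mul_right (enorm_tsum_le _) _
      _ = ∑' j, ENNReal.ofReal (Real.exp (ρ * znorm m)) * (‖fterm a z m j‖₊ : ℝ≥0∞) :=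
          ENNReal.tsum_mul_left.symm
      _ = ∑' j, ENNReal.ofReal (Real.exp (ρ * znorm m) * ‖fterm a z m j‖) :=
          tsum_congr fun j => by
            rw [ENNReal.ofReal_mul (Real.exp_pos _).le, ofReal_norm, enorm_eq_nnnorm]
  have step2 : ∀ (m : Zidx d) (j : Fin k → Zidx d),
      ENNReal.ofReal (Real.exp (ρ * znorm m) * ‖fterm a z m j‖) ≤
      ENNReal.ofReal Pn * ∑ i : Fin k, (if mom j = 0 ∧ j i = m then
        ∏ i' ∈ Finset.univ.erase i, W (j i') else 0) := by
    intro m j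
    refine le_trans (ENNReal.ofReal_le_ofReal
      (key_bound ρ hρ.le a Pn hmom hbd hPn z m j)) ?_
    rw [ENNReal.ofReal_mul hPn]
    refine mul_le_mul_right ?_ _
    rw [ENNReal.ofReal_sum_of_nonneg (fun i _ => by
      split
      · exact Finset.prod_nonneg fun _ _ => hw0 _
      · exact le_refl 0)]
    refine le_of_eq (Finset.sum_congr rfl fun i _ => ?_)
    by_cases hc : mom j = 0 ∧ j i = m
    · rw [if_pos hc, if_pos hc, ENNReal.ofReal_prod_of_nonneg (fun _ _ => hw0 _)]
    · rw [if_neg hc, if_neg hc, ENNReal.ofReal_zero]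
  have step3 : ∀ (i : Fin k) (j : Fin k → Zidx d),
      (∑' m : Zidx d, (if mom j = 0 ∧ j i = m then
        ∏ i' ∈ Finset.univ.erase i, W (j i') else 0))
      = (if mom j = 0 then ∏ i' ∈ Finset.univ.erase i, W (j i') else 0) := by
    intro i j
    rw [tsum_eq_single (j i) (fun m' hm' => if_neg (fun hc => hm' hc.2.symm))]
    by_cases hj : mom j = 0
    · rw [if_pos ⟨hj, rfl⟩, if_pos hj]
    · rw [if_neg (fun hc => hj hc.1), if_neg hj]
  have main : (∑' m : Zidx d, ENNReal.ofReal (Real.exp (ρ * znorm m) * ‖formalDeriv a z m‖))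
      ≤ ENNReal.ofReal (2 * k * Pn * S ^ (k - 1)) := by
    have hfinal : ENNReal.ofReal Pn * ((k : ℝ≥0∞) * (2 * (ENNReal.ofReal S) ^ (k - 1)))
        = ENNReal.ofReal (2 * k * Pn * S ^ (k - 1)) := by
      rw [show (2:ℝ) * k * Pn * S ^ (k-1) = Pn * ((k:ℝ) * (2 * S ^ (k-1))) from by ring]
      rw [ENNReal.ofReal_mul hPn, ENNReal.ofReal_mul (Nat.cast_nonneg k),
        ENNReal.ofReal_mul (by norm_num : (0:ℝ) ≤ 2), ENNReal.ofReal_pow hS0,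
        ENNReal.ofReal_natCast, ENNReal.ofReal_ofNat]
    calc (∑' m : Zidx d, ENNReal.ofReal (Real.exp (ρ * znorm m) * ‖formalDeriv a z m‖))
        ≤ ∑' m : Zidx d, ∑' j : Fin k → Zidx d,
            ENNReal.ofReal (Real.exp (ρ * znorm m) * ‖fterm a z m j‖) :=
          ENNReal.tsum_le_tsum step1
      _ ≤ ∑' m : Zidx d, ∑' j : Fin k → Zidx d,
            (ENNReal.ofReal Pn * ∑ i : Fin k, (if mom j = 0 ∧ j i = m then
              ∏ i' ∈ Finset.univ.erase i, W (j i') else 0)) :=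
          ENNReal.tsum_le_tsum fun m => ENNReal.tsum_le_tsum (step2 m)
      _ = ENNReal.ofReal Pn * ∑' m : Zidx d, ∑' j : Fin k → Zidx d,
            ∑ i : Fin k, (if mom j = 0 ∧ j i = m then
              ∏ i' ∈ Finset.univ.erase i, W (j i') else 0) := by
          rw [← ENNReal.tsum_mul_left]
          exact tsum_congr fun m => ENNReal.tsum_mul_left.symm ▸ rfl
      _ = ENNReal.ofReal Pn * ∑ i : Fin k, ∑' m : Zidx d, ∑' j : Fin k → Zidx d,
            (if mom j = 0 ∧ j i = m then
              ∏ i' ∈ Finset.univ.erase i, W (j i') else 0) := by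
          congr 1
          rw [← Summable.tsum_finsetSum (fun i _ => ENNReal.summable)]
          exact tsum_congr fun m => Summable.tsum_finsetSum (fun i _ => ENNReal.summable)
      _ ≤ ENNReal.ofReal Pn * ∑ i : Fin k, (2 * (ENNReal.ofReal S) ^ (k - 1)) := by
          refine mul_le_mul_right (Finset.sum_le_sum fun i _ => ?_) _
          rw [ENNReal.tsum_comm]
          calc (∑' j : Fin k → Zidx d, ∑' m : Zidx d, (if mom j = 0 ∧ j i = m then
                ∏ i' ∈ Finset.univ.erase i, W (j i') else 0))
              = ∑' j : Fin k → Zidx d, (if mom j = 0 then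
                  ∏ i' ∈ Finset.univ.erase i, W (j i') else 0) :=
                tsum_congr fun j => step3 i j
            _ ≤ 2 * (ENNReal.ofReal S) ^ (k - 1) := hi i
      _ = ENNReal.ofReal (2 * k * Pn * S ^ (k - 1)) := by
          rw [Finset.sum_const, Finset.card_univ, Fintype.card_fin, nsmul_eq_mul, hfinal]
  set g : Zidx d → ℝ := fun m => Real.exp (ρ * znorm m) * ‖formalDeriv a z m‖ with hg
  have hg0 : ∀ m, 0 ≤ g m := fun m => mul_nonneg (Real.exp_pos _).le (norm_nonneg _)
  have hfin : (∑' m, ENNReal.ofReal (g m)) ≠ ⊤ :=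
    ne_top_of_le_ne_top ENNReal.ofReal_ne_top main
  have hsummable : Summable g := by
    have h1 : (∑' m, ((Real.toNNReal (g m) : ℝ≥0) : ℝ≥0∞)) ≠ ⊤ := hfin
    have h2 := ENNReal.tsum_coe_ne_top_iff_summable.mp h1
    exact Summable.congr (NNReal.summable_coe.mpr h2) fun m => Real.coe_toNNReal _ (hg0 m)
  refine ⟨hsummable, ?_⟩
  have heq : ENNReal.ofReal (∑' m, g m) = ∑' m, ENNReal.ofReal (g m) :=
    ENNReal.ofReal_tsum_of_nonneg hg0 hsummable
  have hle : ENNReal.ofReal (∑' m, g m) ≤ ENNReal.ofReal (2 * k * Pn * S ^ (k - 1)) :=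
    heq ▸ main
  exact (ENNReal.ofReal_le_ofReal_iff (by positivity)).mp hle
end

section
/- Let P and Q be homogeneous polynomials of degrees k and ℓ respectively on ℂ^{ℤᵈ×{±1}}, both with only zero-momentum monomials and bounded coefficients with norms ‖P‖ = sup|a_𝐤| and ‖Q‖ = sup|b_𝐥|. Then the Poisson bracket {P,Q} = i ∑_{a ∈ ℤᵈ} (∂P/∂η_a ∂Q/∂ξ_a − ∂P/∂ξ_a ∂Q/∂η_a) is a homogeneous polynomial of degree k + ℓ − 2 with zero-momentum monomials and ‖{P,Q}‖ ≤ 2 k ℓ ‖P‖ ‖Q‖. -/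
/-- Poisson bracket {P,Q}(z) = i ∑_a (∂P/∂η_a ∂Q/∂ξ_a − ∂P/∂ξ_a ∂Q/∂η_a),
where ξ_a = z_{(a,+1)} and η_a = z_{(a,-1)}. -/
noncomputable def poissonBracket {d k l : ℕ}
    (a : (Fin k → Zidx d) → ℂ) (b : (Fin l → Zidx d) → ℂ)
    (z : Zidx d → ℂ) : ℂ :=
  Complex.I * ∑' c : Fin d → ℤ,
    (formalDeriv a z (c, false) * formalDeriv b z (c, true) -
      formalDeriv a z (c, true) * formalDeriv b z (c, false))

open Finset in
noncomputable def Dc {d n : ℕ} (a : (Fin (n + 1) → Zidx d) → ℂ)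
    (m : Zidx d) (r : Fin n → Zidx d) : ℂ :=
  ∑ i : Fin (n + 1), a (i.insertNth m r)

lemma mom_insertNth {d n : ℕ} (i : Fin (n + 1)) (m : Zidx d) (r : Fin n → Zidx d) :
    mom (i.insertNth m r) = (if m.2 then m.1 else -m.1) + mom r := by
  unfold mom
  rw [Fin.sum_univ_succAbove _ i]
  simp only [Fin.insertNth_apply_same, Fin.insertNth_apply_succAbove]
  congr 1
  split <;> simp

lemma Dc_false_ne {d n : ℕ} {a : (Fin (n + 1) → Zidx d) → ℂ}
    (hmoma : ∀ j, a j ≠ 0 → mom j = 0) {c : Fin d → ℤ} {r : Fin n → Zidx d}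
    (h : Dc a (c, false) r ≠ 0) : c = mom r := by
  obtain ⟨i, -, hi⟩ := Finset.exists_ne_zero_of_sum_ne_zero h
  have := hmoma _ hi
  rw [mom_insertNth] at this
  simpa [neg_add_eq_zero] using this

lemma Dc_true_ne {d n : ℕ} {a : (Fin (n + 1) → Zidx d) → ℂ}
    (hmoma : ∀ j, a j ≠ 0 → mom j = 0) {c : Fin d → ℤ} {r : Fin n → Zidx d}
    (h : Dc a (c, true) r ≠ 0) : c = -mom r := by
  obtain ⟨i, -, hi⟩ := Finset.exists_ne_zero_of_sum_ne_zero h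
  have := hmoma _ hi
  rw [mom_insertNth] at this
  simp only [if_pos] at this
  exact eq_neg_of_add_eq_zero_left this

lemma Dc_norm {d n : ℕ} {a : (Fin (n + 1) → Zidx d) → ℂ} {Pn : ℝ}
    (hbda : ∀ j, ‖a j‖ ≤ Pn) (m : Zidx d) (r : Fin n → Zidx d) :
    ‖Dc a m r‖ ≤ (n + 1) * Pn := by
  calc ‖Dc a m r‖ ≤ ∑ i : Fin (n+1), ‖a (i.insertNth m r)‖ := norm_sum_le _ _
    _ ≤ ∑ _i : Fin (n+1), Pn := Finset.sum_le_sum fun i _ => hbda _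
    _ = (n + 1) * Pn := by simp [mul_comm]

lemma prod_erase_eq {d n : ℕ} (z : Zidx d → ℂ) (j : Fin (n + 1) → Zidx d) (i : Fin (n + 1)) :
    ∏ i' ∈ Finset.univ.erase i, z (j i') = ∏ q : Fin n, z (j (i.succAbove q)) := by
  have h1 : Finset.univ.erase i = Finset.image i.succAbove Finset.univ := by
    rw [Fin.image_succAbove_univ, Finset.compl_eq_univ_sdiff, ← Finset.erase_eq]
  rw [h1, Finset.prod_image (fun x _ y _ h => Fin.succAbove_right_injective h)]

lemma formalDeriv_eq_s6 {d n : ℕ} (a : (Fin (n + 1) → Zidx d) → ℂ) (z : Zidx d → ℂ)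
    (hz : {j | z j ≠ 0}.Finite) (m : Zidx d) :
    formalDeriv a z m = ∑ r ∈ Fintype.piFinset (fun _ : Fin n => hz.toFinset),
      Dc a m r * ∏ q, z (r q) := by
  classical
  set S := hz.toFinset with hS
  have hmemS : ∀ x, x ∈ S ↔ z x ≠ 0 := fun x => hz.mem_toFinset
  set T : Finset (Fin (n + 1) → Zidx d) := Fintype.piFinset (fun _ => insert m S) with hT
  set T' : Finset (Fin n → Zidx d) := Fintype.piFinset (fun _ => insert m S) with hT'
  have hout : ∀ j ∉ T,
      (a j * ∑ i, (if j i = m then ∏ i' ∈ Finset.univ.erase i, z (j i') else 0)) = 0 := by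
    intro j hj
    rw [hT, Fintype.mem_piFinset] at hj
    push_neg at hj
    obtain ⟨i0, hi0⟩ := hj
    refine mul_eq_zero_of_right _ (Finset.sum_eq_zero fun i _ => ?_)
    by_cases hi : j i = m
    · rw [if_pos hi]
      refine Finset.prod_eq_zero (i := i0) ?_ ?_
      · refine Finset.mem_erase.2 ⟨fun h => ?_, Finset.mem_univ _⟩
        exact hi0 (h ▸ hi ▸ Finset.mem_insert_self m S)
      · by_contra h
        exact hi0 (Finset.mem_insert_of_mem ((hmemS _).2 h))
    · rw [if_neg hi]
  rw [formalDeriv, tsum_eq_sum hout]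
  have step : ∀ j ∈ T, (a j * ∑ i, (if j i = m then ∏ i' ∈ Finset.univ.erase i, z (j i') else 0))
      = ∑ i : Fin (n + 1), (if j i = m then a j * ∏ q : Fin n, z (j (i.succAbove q)) else 0) := by
    intro j _
    rw [Finset.mul_sum]
    refine Finset.sum_congr rfl fun i _ => ?_
    by_cases h : j i = m <;> simp [h, prod_erase_eq z j i]
  rw [Finset.sum_congr rfl step, Finset.sum_comm]
  have step2 : ∀ i : Fin (n + 1),
      (∑ j ∈ T, if j i = m then a j * ∏ q : Fin n, z (j (i.succAbove q)) else 0)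
      = ∑ r ∈ T', a (i.insertNth m r) * ∏ q : Fin n, z (r q) := by
    intro i
    rw [Finset.sum_ite, Finset.sum_const_zero, add_zero]
    refine Finset.sum_nbij' (fun j => fun q => j (i.succAbove q)) (fun r => i.insertNth m r)
      ?_ ?_ ?_ ?_ ?_
    · intro j hj
      rw [Fintype.mem_piFinset]
      intro q
      exact Fintype.mem_piFinset.1 (Finset.mem_filter.1 hj).1 _
    · intro r hr
      refine Finset.mem_filter.2 ⟨Fintype.mem_piFinset.2 fun p => ?_, by simp⟩
      beta_reduce
      by_cases hp : p = i
      · subst hp; rw [Fin.insertNth_apply_same]; exact Finset.mem_insert_self m S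
      · obtain ⟨q, rfl⟩ := Fin.exists_succAbove_eq (Ne.symm (fun h => hp h.symm))
        rw [Fin.insertNth_apply_succAbove]
        exact Fintype.mem_piFinset.1 hr q
    · intro j hj
      have hji : j i = m := (Finset.mem_filter.1 hj).2
      beta_reduce
      conv_rhs => rw [← Fin.insertNth_self_removeNth i j]
      rw [hji]
      rfl
    · intro r _
      funext q
      simp
    · intro j hj
      have hji : j i = m := (Finset.mem_filter.1 hj).2
      beta_reduce
      congr 1
      conv_lhs => rw [← Fin.insertNth_self_removeNth i j, hji]
      rfl
  rw [Finset.sum_congr rfl (fun i _ => step2 i), Finset.sum_comm]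
  rw [Finset.sum_congr rfl (fun r _ => (Finset.sum_mul _ _ _).symm)]
  refine (Finset.sum_subset ?_ ?_).symm
  · intro r hr
    rw [Fintype.mem_piFinset] at hr ⊢
    exact fun q => Finset.mem_insert_of_mem (hr q)
  · intro r _ hr
    rw [Fintype.mem_piFinset] at hr
    push_neg at hr
    obtain ⟨q0, hq0⟩ := hr
    refine mul_eq_zero_of_right _ (Finset.prod_eq_zero (Finset.mem_univ q0) ?_)
    by_contra h
    exact hq0 ((hmemS _).2 h)

lemma mom_split {d K L : ℕ} (J : Fin (K + L) → Zidx d) :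
    mom J = mom (fun q => J (Fin.castAdd L q)) + mom (fun q => J (Fin.natAdd K q)) := by
  unfold mom
  exact Fin.sum_univ_add _

theorem stmt6 (d k l : ℕ) (hk : 2 ≤ k) (hl : 2 ≤ l)
    (a : (Fin k → Zidx d) → ℂ) (b : (Fin l → Zidx d) → ℂ) (Pn Qn : ℝ)
    (hmoma : ∀ j, a j ≠ 0 → mom j = 0) (hbda : ∀ j, ‖a j‖ ≤ Pn)
    (hmomb : ∀ j, b j ≠ 0 → mom j = 0) (hbdb : ∀ j, ‖b j‖ ≤ Qn) :
    -- {P,Q} is a homogeneous polynomial of degree k + l − 2, with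
    -- zero-momentum monomials and coefficients bounded by 2 k l ‖P‖ ‖Q‖
    ∃ c : (Fin (k + l - 2) → Zidx d) → ℂ,
      (∀ j, c j ≠ 0 → mom j = 0) ∧
      (∀ j, ‖c j‖ ≤ 2 * k * l * Pn * Qn) ∧
      (∀ z : Zidx d → ℂ, {j : Zidx d | z j ≠ 0}.Finite →
        poissonBracket a b z = ∑' j : Fin (k + l - 2) → Zidx d, c j * ∏ i, z (j i)) := by
  classical
  obtain ⟨k', rfl⟩ : ∃ k', k = k' + 2 := ⟨k - 2, by omega⟩
  obtain ⟨l', rfl⟩ : ∃ l', l = l' + 2 := ⟨l - 2, by omega⟩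
  rw [show k' + 2 + (l' + 2) - 2 = (k' + 1) + (l' + 1) from by omega]
  have hP0 : 0 ≤ Pn := le_trans (norm_nonneg _) (hbda fun _ => ((0 : Fin d → ℤ), true))
  have hQ0 : 0 ≤ Qn := le_trans (norm_nonneg _) (hbdb fun _ => ((0 : Fin d → ℤ), true))
  refine ⟨fun J => Complex.I *
      (Dc (n := k' + 1) a (mom fun q => J (Fin.castAdd (l' + 1) q), false)
            (fun q => J (Fin.castAdd (l' + 1) q)) *
         Dc (n := l' + 1) b (mom fun q => J (Fin.castAdd (l' + 1) q), true)
            (fun q => J (Fin.natAdd (k' + 1) q)) -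
       Dc (n := k' + 1) a (-(mom fun q => J (Fin.castAdd (l' + 1) q)), true)
            (fun q => J (Fin.castAdd (l' + 1) q)) *
         Dc (n := l' + 1) b (-(mom fun q => J (Fin.castAdd (l' + 1) q)), false)
            (fun q => J (Fin.natAdd (k' + 1) q))),
    ?_, ?_, ?_⟩
  · -- zero momentum
    intro J hJ
    set u := mom fun q => J (Fin.castAdd (l' + 1) q) with hu
    have hor : (Dc (n := k' + 1) a (u, false) (fun q => J (Fin.castAdd (l' + 1) q)) *
          Dc (n := l' + 1) b (u, true) (fun q => J (Fin.natAdd (k' + 1) q)) ≠ 0) ∨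
        (Dc (n := k' + 1) a (-u, true) (fun q => J (Fin.castAdd (l' + 1) q)) *
          Dc (n := l' + 1) b (-u, false) (fun q => J (Fin.natAdd (k' + 1) q)) ≠ 0) := by
      by_contra h
      push_neg at h
      refine hJ ?_
      beta_reduce
      rw [← hu, h.1, h.2]
      ring
    rw [mom_split J, ← hu]
    rcases hor with h | h
    · have hb := (mul_ne_zero_iff.1 h).2
      have : u = -(mom fun q => J (Fin.natAdd (k' + 1) q)) := Dc_true_ne hmomb hb
      rw [this]
      simp
    · have hb := (mul_ne_zero_iff.1 h).2
      have : -u = mom fun q => J (Fin.natAdd (k' + 1) q) := Dc_false_ne hmomb hb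
      rw [← this]
      simp
  · -- bound
    intro J
    set u := mom fun q => J (Fin.castAdd (l' + 1) q) with hu
    have h1 : ‖Dc (n := k' + 1) a (u, false) (fun q => J (Fin.castAdd (l' + 1) q)) *
        Dc (n := l' + 1) b (u, true) (fun q => J (Fin.natAdd (k' + 1) q))‖ ≤
        ((((k' + 1 : ℕ) : ℝ) + 1) * Pn) * ((((l' + 1 : ℕ) : ℝ) + 1) * Qn) := by
      rw [norm_mul]
      exact mul_le_mul (Dc_norm hbda _ _) (Dc_norm hbdb _ _) (norm_nonneg _)
        (mul_nonneg (by positivity) hP0)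
    have h2 : ‖Dc (n := k' + 1) a (-u, true) (fun q => J (Fin.castAdd (l' + 1) q)) *
        Dc (n := l' + 1) b (-u, false) (fun q => J (Fin.natAdd (k' + 1) q))‖ ≤
        ((((k' + 1 : ℕ) : ℝ) + 1) * Pn) * ((((l' + 1 : ℕ) : ℝ) + 1) * Qn) := by
      rw [norm_mul]
      exact mul_le_mul (Dc_norm hbda _ _) (Dc_norm hbdb _ _) (norm_nonneg _)
        (mul_nonneg (by positivity) hP0)
    rw [norm_mul, Complex.norm_I, one_mul]
    refine le_trans (norm_sub_le _ _) (le_trans (add_le_add h1 h2) (le_of_eq ?_))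
    push_cast
    ring
  · -- evaluation
    intro z hz
    set S := hz.toFinset with hS
    have hmemS : ∀ x, x ∈ S ↔ z x ≠ 0 := fun x => hz.mem_toFinset
    set RK := Fintype.piFinset (fun _ : Fin (k' + 1) => S) with hRK
    set RL := Fintype.piFinset (fun _ : Fin (l' + 1) => S) with hRL
    set RKL := Fintype.piFinset (fun _ : Fin (k' + 1 + (l' + 1)) => S) with hRKL
    have hFDa : ∀ m, formalDeriv a z m = ∑ r ∈ RK, Dc (n := k' + 1) a m r * ∏ q, z (r q) :=
      fun m => formalDeriv_eq_s6 a z hz m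
    have hFDb : ∀ m, formalDeriv b z m = ∑ s ∈ RL, Dc (n := l' + 1) b m s * ∏ q, z (s q) :=
      fun m => formalDeriv_eq_s6 b z hz m
    have key : ∀ c : Fin d → ℤ,
        formalDeriv a z (c, false) * formalDeriv b z (c, true) -
          formalDeriv a z (c, true) * formalDeriv b z (c, false)
        = ∑ p ∈ RK ×ˢ RL,
            (Dc (n := k' + 1) a (c, false) p.1 * Dc (n := l' + 1) b (c, true) p.2 -
              Dc (n := k' + 1) a (c, true) p.1 * Dc (n := l' + 1) b (c, false) p.2) *
              ((∏ q, z (p.1 q)) * (∏ q, z (p.2 q))) := by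
      intro c
      rw [Finset.sum_product, hFDa, hFDb, hFDa, hFDb, Finset.sum_mul_sum, Finset.sum_mul_sum,
        ← Finset.sum_sub_distrib]
      refine Finset.sum_congr rfl fun r _ => ?_
      rw [← Finset.sum_sub_distrib]
      refine Finset.sum_congr rfl fun s _ => ?_
      ring
    have hzero : ∀ (r : Fin (k' + 1) → Zidx d) (s : Fin (l' + 1) → Zidx d),
        ∀ c ∉ ({mom r, -mom r} : Finset (Fin d → ℤ)),
          (Dc (n := k' + 1) a (c, false) r * Dc (n := l' + 1) b (c, true) s -
            Dc (n := k' + 1) a (c, true) r * Dc (n := l' + 1) b (c, false) s) = 0 := by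
      intro r s c hc
      simp only [Finset.mem_insert, Finset.mem_singleton] at hc
      push_neg at hc
      have h1 : Dc (n := k' + 1) a (c, false) r = 0 := by
        by_contra h; exact hc.1 (Dc_false_ne hmoma h)
      have h2 : Dc (n := k' + 1) a (c, true) r = 0 := by
        by_contra h; exact hc.2 (Dc_true_ne hmoma h)
      rw [h1, h2]
      ring
    have inner : ∀ (r : Fin (k' + 1) → Zidx d) (s : Fin (l' + 1) → Zidx d),
        (∑' c : Fin d → ℤ,
          (Dc (n := k' + 1) a (c, false) r * Dc (n := l' + 1) b (c, true) s -
            Dc (n := k' + 1) a (c, true) r * Dc (n := l' + 1) b (c, false) s) *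
            ((∏ q, z (r q)) * (∏ q, z (s q))))
        = (Dc (n := k' + 1) a (mom r, false) r * Dc (n := l' + 1) b (mom r, true) s -
            Dc (n := k' + 1) a (-mom r, true) r * Dc (n := l' + 1) b (-mom r, false) s) *
            ((∏ q, z (r q)) * (∏ q, z (s q))) := by
      intro r s
      rw [tsum_mul_right]
      congr 1
      have hs1 : Summable (fun c : Fin d → ℤ =>
          Dc (n := k' + 1) a (c, false) r * Dc (n := l' + 1) b (c, true) s) := by
        refine summable_of_ne_finset_zero (s := {mom r}) fun c hc => ?_
        rw [Finset.mem_singleton] at hc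
        have h1 : Dc (n := k' + 1) a (c, false) r = 0 := by
          by_contra h; exact hc (Dc_false_ne hmoma h)
        rw [h1, zero_mul]
      have hs2 : Summable (fun c : Fin d → ℤ =>
          Dc (n := k' + 1) a (c, true) r * Dc (n := l' + 1) b (c, false) s) := by
        refine summable_of_ne_finset_zero (s := {-mom r}) fun c hc => ?_
        rw [Finset.mem_singleton] at hc
        have h1 : Dc (n := k' + 1) a (c, true) r = 0 := by
          by_contra h; exact hc (Dc_true_ne hmoma h)
        rw [h1, zero_mul]
      rw [Summable.tsum_sub hs1 hs2]
      congr 1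
      · refine tsum_eq_single (mom r) fun c hc => ?_
        have h1 : Dc (n := k' + 1) a (c, false) r = 0 := by
          by_contra h; exact hc (Dc_false_ne hmoma h)
        rw [h1, zero_mul]
      · refine tsum_eq_single (-mom r) fun c hc => ?_
        have h1 : Dc (n := k' + 1) a (c, true) r = 0 := by
          by_contra h; exact hc (Dc_true_ne hmoma h)
        rw [h1, zero_mul]
    have hsummable : ∀ p ∈ RK ×ˢ RL, Summable (fun c : Fin d → ℤ =>
        (Dc (n := k' + 1) a (c, false) p.1 * Dc (n := l' + 1) b (c, true) p.2 -
          Dc (n := k' + 1) a (c, true) p.1 * Dc (n := l' + 1) b (c, false) p.2) *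
          ((∏ q, z (p.1 q)) * (∏ q, z (p.2 q)))) := by
      intro p _
      refine summable_of_ne_finset_zero (s := {mom p.1, -mom p.1}) fun c hc => ?_
      rw [hzero p.1 p.2 c hc, zero_mul]
    rw [poissonBracket, tsum_congr key, Summable.tsum_finsetSum hsummable]
    have hout2 : ∀ J ∉ RKL,
        (fun J => Complex.I *
          (Dc (n := k' + 1) a (mom fun q => J (Fin.castAdd (l' + 1) q), false)
              (fun q => J (Fin.castAdd (l' + 1) q)) *
            Dc (n := l' + 1) b (mom fun q => J (Fin.castAdd (l' + 1) q), true)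
              (fun q => J (Fin.natAdd (k' + 1) q)) -
          Dc (n := k' + 1) a (-(mom fun q => J (Fin.castAdd (l' + 1) q)), true)
              (fun q => J (Fin.castAdd (l' + 1) q)) *
            Dc (n := l' + 1) b (-(mom fun q => J (Fin.castAdd (l' + 1) q)), false)
              (fun q => J (Fin.natAdd (k' + 1) q)))) J * ∏ i, z (J i) = 0 := by
      intro J hJ
      rw [Fintype.mem_piFinset] at hJ
      push_neg at hJ
      obtain ⟨i0, hi0⟩ := hJ
      refine mul_eq_zero_of_right _ (Finset.prod_eq_zero (Finset.mem_univ i0) ?_)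
      by_contra h
      exact hi0 ((hmemS _).2 h)
    rw [tsum_eq_sum hout2]
    rw [Finset.mul_sum]
    refine Finset.sum_nbij' (fun p => Fin.append p.1 p.2)
      (fun J => (fun q => J (Fin.castAdd (l' + 1) q), fun q => J (Fin.natAdd (k' + 1) q)))
      ?_ ?_ ?_ ?_ ?_
    · intro p hp
      rw [Finset.mem_product] at hp
      rw [Fintype.mem_piFinset]
      intro i
      beta_reduce
      refine Fin.addCases (fun q => ?_) (fun q => ?_) i
      · rw [Fin.append_left]
        exact Fintype.mem_piFinset.1 hp.1 q
      · rw [Fin.append_right]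
        exact Fintype.mem_piFinset.1 hp.2 q
    · intro J hJ
      rw [Finset.mem_product]
      constructor
      · exact Fintype.mem_piFinset.2 fun q => Fintype.mem_piFinset.1 hJ _
      · exact Fintype.mem_piFinset.2 fun q => Fintype.mem_piFinset.1 hJ _
    · intro p _
      beta_reduce
      refine Prod.ext ?_ ?_
      · funext q
        simp [Fin.append_left]
      · funext q
        simp [Fin.append_right]
    · intro J _
      beta_reduce
      exact Fin.append_castAdd_natAdd
    · intro p hp
      beta_reduce
      rw [inner p.1 p.2]
      have e1 : (fun q => Fin.append p.1 p.2 (Fin.castAdd (l' + 1) q)) = p.1 := by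
        funext q; rw [Fin.append_left]
      have e2 : (fun q => Fin.append p.1 p.2 (Fin.natAdd (k' + 1) q)) = p.2 := by
        funext q; rw [Fin.append_right]
      have e3 : (∏ i, z (Fin.append p.1 p.2 i)) = (∏ q, z (p.1 q)) * (∏ q, z (p.2 q)) := by
        rw [Fin.prod_univ_add]
        congr 1
        · exact Finset.prod_congr rfl fun q _ => by rw [Fin.append_left]
        · exact Finset.prod_congr rfl fun q _ => by rw [Fin.append_right]
      rw [e1, e2, e3]
      ring
end
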